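/- Let A be a countable alphabet, P a probability distribution on A with finite Shannon entropy H(P) = -∑_{a∈A} P(a) log₂ P(a) < ∞, and let D be a proper and almost surely complete dictionary over A. Then H(D) = H(P) · l̄(D), where H(D) = -∑_{α∈D} P(α) log₂ P(α) is the entropy of the dictionary and l̄(D) = ∑_{α∈D} P(α)|α| is its average length (both sums taken in [0,∞]). -/

import Mathlib

open scoped ENNReal
open Filter

/-- The probability of a finite string, obtained by extending the
distribution `P` multiplicatively: `P(a₁⋯aₙ) = ∏ᵢ P(aᵢ)`. -/
noncomputable def strProb {A : Type*} (P : PMF A) (l : List A) : ℝ≥0∞ :=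
  (l.map fun a => P a).prod

/-- A dictionary is a set of nonempty finite strings. -/
def IsDictionary {A : Type*} (D : Set (List A)) : Prop :=
  ∀ α ∈ D, α ≠ []

/-- A dictionary is proper if no string in it is a (proper) prefix of
another string in it. -/
def IsProper {A : Type*} (D : Set (List A)) : Prop :=
  ∀ α ∈ D, ∀ β ∈ D, α <+: β → α = β

/-- A dictionary is complete if every infinite sequence over `A` has a
prefix in it. -/
def IsCompleteDict {A : Type*} (D : Set (List A)) : Prop :=
  ∀ x : ℕ → A, ∃ α ∈ D, α = (List.range α.length).map x

/-- The probability that the length-`n` prefix of a random infinite sequence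
has some prefix belonging to `D`. -/
noncomputable def prefixProb {A : Type*} (P : PMF A) (D : Set (List A)) (n : ℕ) : ℝ≥0∞ :=
  ∑' γ : {γ : List A // γ.length = n ∧ ∃ β ∈ D, β <+: γ}, strProb P γ

/-- `D` is almost surely complete: under the infinite product measure `P^ℕ`,
the event that an infinite sequence has a prefix in `D` has probability `1`.
(By continuity from below, this probability is the limit, as `n → ∞`, of the
probability that the length-`n` prefix has a prefix in `D`.) -/
def IsASC {A : Type*} (P : PMF A) (D : Set (List A)) : Prop :=
  Tendsto (prefixProb P D) atTop (nhds 1)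

/-- `Tset D n` = strings of length `n` having no prefix in `D`. -/
def Tset {A : Type*} (D : Set (List A)) (n : ℕ) : Set (List A) :=
  {α | α.length = n ∧ ∀ β ∈ D, ¬ β <+: α}

/-- `Dperp D n = {α ∈ D : |α| = n} ∪ Tₙ`. -/
def Dperp {A : Type*} (D : Set (List A)) (n : ℕ) : Set (List A) :=
  {α ∈ D | α.length = n} ∪ Tset D n

/-- `Dn D n = {α ∈ D : |α| < n} ∪ Dₙ^⊥`. -/
def Dn {A : Type*} (D : Set (List A)) (n : ℕ) : Set (List A) :=
  {α ∈ D | α.length < n} ∪ Dperp D n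

/-- The one-letter extensions `αA = {αa : a ∈ A}` of a string `α`. -/
def oneExt {A : Type*} (α : List A) : Set (List A) :=
  {l | ∃ a : A, l = α ++ [a]}

/-- The extension `D[α] = (D \ {α}) ∪ αA` of a dictionary at `α`. -/
def extendDict {A : Type*} (D : Set (List A)) (α : List A) : Set (List A) :=
  (D \ {α}) ∪ oneExt α

/-- The nonnegative entropy contribution `-p log₂ p ∈ [0,∞]` of a
probability value `p`. -/
noncomputable def entTerm (p : ℝ≥0∞) : ℝ≥0∞ :=
  ENNReal.ofReal (-(p.toReal * Real.logb 2 p.toReal))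

/-- The entropy `H(E) = -∑_{α∈E} P(α) log₂ P(α)` of a dictionary, in `[0,∞]`. -/
noncomputable def dictEntropy {A : Type*} (P : PMF A) (E : Set (List A)) : ℝ≥0∞ :=
  ∑' α : E, entTerm (strProb P α)

/-- The average length `l̄(E) = ∑_{α∈E} P(α)|α|` of a dictionary, in `[0,∞]`. -/
noncomputable def avgLen {A : Type*} (P : PMF A) (E : Set (List A)) : ℝ≥0∞ :=
  ∑' α : E, strProb P α * (α : List A).length

/-- The source entropy `H(P) = -∑_{a∈A} P(a) log₂ P(a)`, in `[0,∞]`. -/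
noncomputable def srcEntropy {A : Type*} (P : PMF A) : ℝ≥0∞ :=
  ∑' a : A, entTerm (P a)

section AuxL

variable {A : Type*} (P : PMF A)

lemma strProb_nil : strProb P ([] : List A) = 1 := rfl

lemma strProb_cons (a : A) (l : List A) : strProb P (a :: l) = P a * strProb P l := by
  simp [strProb]

lemma strProb_append (l₁ l₂ : List A) :
    strProb P (l₁ ++ l₂) = strProb P l₁ * strProb P l₂ := by
  simp [strProb]

lemma strProb_le_one (l : List A) : strProb P l ≤ 1 := by
  induction l with
  | nil => simp [strProb_nil]
  | cons a l ih =>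
    rw [strProb_cons]
    calc P a * strProb P l ≤ 1 * 1 := mul_le_mul' (P.coe_le_one a) ih
    _ = 1 := one_mul 1

lemma strProb_ne_top (l : List A) : strProb P l ≠ ⊤ :=
  ne_top_of_le_ne_top ENNReal.one_ne_top (strProb_le_one P l)

/-- total probability of strings of a given length -/
lemma tsum_strProb_len : ∀ n : ℕ, ∑' γ : {γ : List A // γ.length = n}, strProb P γ.1 = 1 := by
  intro n
  induction n with
  | zero =>
    rw [← Equiv.tsum_eq (α := ℝ≥0∞)
      (⟨fun _ => ⟨[], rfl⟩, fun _ => PUnit.unit, fun _ => rfl, by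
          rintro ⟨γ, hγ⟩
          rw [List.length_eq_zero_iff] at hγ
          subst hγ; rfl⟩ : PUnit.{1} ≃ {γ : List A // γ.length = 0})
      (fun γ => strProb P γ.1)]
    exact tsum_eq_single PUnit.unit fun b hb => absurd (Subsingleton.elim _ _) hb
  | succ n ih =>
    have hbij : Function.Bijective
        (fun x : A × {γ : List A // γ.length = n} =>
          (⟨x.1 :: x.2.1, by simp [x.2.2]⟩ : {γ : List A // γ.length = n + 1})) := by
      constructor
      · rintro ⟨a, γ, hγ⟩ ⟨b, δ, hδ⟩ h
        have h' : (a :: γ : List A) = b :: δ := congrArg Subtype.val h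
        simp only [List.cons.injEq] at h'
        obtain ⟨rfl, rfl⟩ := h'
        rfl
      · rintro ⟨γ, hγ⟩
        match γ, hγ with
        | a :: γ, hγ =>
          exact ⟨⟨a, ⟨γ, by simpa using hγ⟩⟩, rfl⟩
    rw [← Equiv.tsum_eq (Equiv.ofBijective _ hbij) (fun γ => strProb P γ.1)]
    have hstep : ∀ x : A × {γ : List A // γ.length = n},
        strProb P ((Equiv.ofBijective _ hbij) x).1 = P x.1 * strProb P x.2.1 := by
      rintro ⟨a, γ, hγ⟩
      exact strProb_cons P a γ
    rw [tsum_congr hstep, ENNReal.tsum_prod']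
    have hinner : ∀ a : A,
        ∑' γ : {γ : List A // γ.length = n}, P a * strProb P γ.1 = P a := fun a => by
      rw [ENNReal.tsum_mul_left, ih, mul_one]
    rw [tsum_congr hinner, P.tsum_coe]

/-- total probability of length-`m` extensions of `δ` -/
lemma tsum_strProb_ext (δ : List A) {m : ℕ} (hm : δ.length ≤ m) :
    ∑' γ : {γ : List A // γ.length = m ∧ δ <+: γ}, strProb P γ.1 = strProb P δ := by
  have hbij : Function.Bijective
      (fun ρ : {ρ : List A // ρ.length = m - δ.length} =>
        (⟨δ ++ ρ.1, by
          have := ρ.2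
          simp only [List.length_append]
          omega, List.prefix_append δ ρ.1⟩ : {γ : List A // γ.length = m ∧ δ <+: γ})) := by
    constructor
    · rintro ⟨ρ₁, h₁⟩ ⟨ρ₂, h₂⟩ h
      have h' : δ ++ ρ₁ = δ ++ ρ₂ := congrArg Subtype.val h
      exact Subtype.ext (List.append_cancel_left h')
    · rintro ⟨γ, hγ, hpre⟩
      obtain ⟨ρ, rfl⟩ := hpre
      have : ρ.length = m - δ.length := by
        rw [List.length_append] at hγ; omega
      exact ⟨⟨ρ, this⟩, rfl⟩
  rw [← Equiv.tsum_eq (Equiv.ofBijective _ hbij) (fun γ => strProb P γ.1)]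
  have hstep : ∀ ρ : {ρ : List A // ρ.length = m - δ.length},
      strProb P ((Equiv.ofBijective _ hbij) ρ).1 = strProb P δ * strProb P ρ.1 := by
    rintro ⟨ρ, hρ⟩
    exact strProb_append P δ ρ
  rw [tsum_congr hstep, ENNReal.tsum_mul_left, tsum_strProb_len P (m - δ.length), mul_one]

end AuxL

section EntAux

lemma entTerm_zero : entTerm 0 = 0 := by
  simp [entTerm]

lemma entTerm_eq {p : ℝ≥0∞} (hp : p ≤ 1) :
    entTerm p = p * ENNReal.ofReal (-(Real.logb 2 p.toReal)) := by
  rcases eq_or_ne p 0 with rfl | h0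
  · simp [entTerm]
  · have hpt : p ≠ ⊤ := ne_top_of_le_ne_top ENNReal.one_ne_top hp
    have ht0 : 0 ≤ p.toReal := ENNReal.toReal_nonneg
    rw [entTerm, show -(p.toReal * Real.logb 2 p.toReal)
        = p.toReal * -(Real.logb 2 p.toReal) by ring,
      ENNReal.ofReal_mul ht0, ENNReal.ofReal_toReal hpt]

lemma entTerm_mul {x y : ℝ≥0∞} (hx : x ≤ 1) (hy : y ≤ 1) :
    entTerm (x * y) = y * entTerm x + x * entTerm y := by
  rcases eq_or_ne x 0 with rfl | hx0
  · simp [entTerm_zero]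
  rcases eq_or_ne y 0 with rfl | hy0
  · simp [entTerm_zero]
  have hxt : x ≠ ⊤ := ne_top_of_le_ne_top ENNReal.one_ne_top hx
  have hyt : y ≠ ⊤ := ne_top_of_le_ne_top ENNReal.one_ne_top hy
  have hxr : x.toReal ≠ 0 := ENNReal.toReal_ne_zero.mpr ⟨hx0, hxt⟩
  have hyr : y.toReal ≠ 0 := ENNReal.toReal_ne_zero.mpr ⟨hy0, hyt⟩
  have hxy1 : x * y ≤ 1 := by
    calc x * y ≤ 1 * 1 := mul_le_mul' hx hy
    _ = 1 := one_mul 1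
  have hlogx : 0 ≤ -(Real.logb 2 x.toReal) := by
    have := Real.logb_nonpos (by norm_num : (1:ℝ) < 2) ENNReal.toReal_nonneg
      (by
        have := ENNReal.toReal_mono ENNReal.one_ne_top hx
        simpa using this)
    linarith
  have hlogy : 0 ≤ -(Real.logb 2 y.toReal) := by
    have := Real.logb_nonpos (by norm_num : (1:ℝ) < 2) ENNReal.toReal_nonneg
      (by
        have := ENNReal.toReal_mono ENNReal.one_ne_top hy
        simpa using this)
    linarith
  rw [entTerm_eq hxy1, entTerm_eq hx, entTerm_eq hy]
  rw [ENNReal.toReal_mul, Real.logb_mul hxr hyr,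
    show -(Real.logb 2 x.toReal + Real.logb 2 y.toReal)
      = -(Real.logb 2 x.toReal) + -(Real.logb 2 y.toReal) by ring,
    ENNReal.ofReal_add hlogx hlogy]
  ring

end EntAux

section Trunc

variable {X : Type*}

/-- tsum over a monotone union of sets is the sup of the truncated sums. -/
lemma tsum_set_mono_le (f : X → ℝ≥0∞) {s t : Set X} (h : s ⊆ t) :
    ∑' x : s, f x ≤ ∑' x : t, f x := by
  rw [tsum_subtype s f, tsum_subtype t f]
  exact Summable.tsum_le_tsum
    (fun x => Set.indicator_le_indicator_of_subset h (fun _ => zero_le) x)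
    ENNReal.summable ENNReal.summable

lemma tsum_iUnion_mono (f : X → ℝ≥0∞) (S : ℕ → Set X) (hmono : Monotone S) :
    ∑' x : (⋃ n, S n), f x = ⨆ n, ∑' x : S n, f x := by
  classical
  refine le_antisymm ?_ (iSup_le fun n => tsum_set_mono_le f (Set.subset_iUnion S n))
  rw [tsum_subtype, ENNReal.tsum_eq_iSup_sum]
  refine iSup_le fun F => ?_
  set g : X → ℕ := fun x => if h : ∃ n, x ∈ S n then h.choose else 0 with hg
  set N : ℕ := F.sup g with hN
  have hle : ∀ x ∈ F, (⋃ n, S n).indicator f x ≤ (S N).indicator f x := by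
    intro x hx
    by_cases hxU : x ∈ ⋃ n, S n
    · have hex : ∃ n, x ∈ S n := by simpa using hxU
      have hxS : x ∈ S (g x) := by
        rw [hg]; simp only [dif_pos hex]; exact hex.choose_spec
      have hxN : x ∈ S N := hmono (Finset.le_sup hx) hxS
      rw [Set.indicator_of_mem hxU, Set.indicator_of_mem hxN]
    · rw [Set.indicator_of_notMem hxU]
      exact zero_le
  calc ∑ x ∈ F, (⋃ n, S n).indicator f x ≤ ∑ x ∈ F, (S N).indicator f x :=
        Finset.sum_le_sum hle
  _ ≤ ∑' x, (S N).indicator f x := ENNReal.sum_le_tsum F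
  _ = ∑' x : S N, f x := (tsum_subtype _ _).symm
  _ ≤ ⨆ n, ∑' x : S n, f x := le_iSup (fun n => ∑' x : S n, f x) N

end Trunc



section Partition

variable {A : Type*} (P : PMF A) (D : Set (List A))

lemma partition_a (hprop : IsProper D) (γ : List A) (hγ : ∀ β ∈ D, ¬ β <+: γ)
    {m : ℕ} (hm : γ.length ≤ m) :
    ∑' δ : {δ : List A // δ.length = m ∧ γ <+: δ ∧ ∃ β ∈ D, β <+: δ}, strProb P δ.1
      = ∑' β : {β : List A // β ∈ D ∧ γ <+: β ∧ β.length ≤ m}, strProb P β.1 := by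
  have hbij : Function.Bijective
      (fun x : Σ β : {β : List A // β ∈ D ∧ γ <+: β ∧ β.length ≤ m},
          {ρ : List A // ρ.length = m - β.1.length} =>
        (⟨x.1.1 ++ x.2.1, by
            have h1 := x.1.2.2.2
            have h2 := x.2.2
            simp only [List.length_append]
            omega,
          x.1.2.2.1.trans (List.prefix_append x.1.1 x.2.1),
          ⟨x.1.1, x.1.2.1, List.prefix_append x.1.1 x.2.1⟩⟩ :
          {δ : List A // δ.length = m ∧ γ <+: δ ∧ ∃ β ∈ D, β <+: δ})) := by
    constructor
    · rintro ⟨⟨β₁, hβ₁⟩, ⟨ρ₁, hρ₁⟩⟩ ⟨⟨β₂, hβ₂⟩, ⟨ρ₂, hρ₂⟩⟩ h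
      have hlist : β₁ ++ ρ₁ = β₂ ++ ρ₂ := congrArg Subtype.val h
      have hpre₂ : β₂ <+: β₁ ++ ρ₁ := by
        rw [hlist]; exact List.prefix_append β₂ ρ₂
      obtain rfl : β₁ = β₂ := by
        rcases List.prefix_or_prefix_of_prefix (List.prefix_append β₁ ρ₁) hpre₂ with hc | hc
        · exact hprop β₁ hβ₁.1 β₂ hβ₂.1 hc
        · exact (hprop β₂ hβ₂.1 β₁ hβ₁.1 hc).symm
      obtain rfl : ρ₁ = ρ₂ := List.append_cancel_left hlist
      rfl
    · rintro ⟨δ, hlen, hγδ, β, hβD, hβδ⟩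
      have hγβ : γ <+: β := by
        rcases List.prefix_or_prefix_of_prefix hβδ hγδ with hc | hc
        · exact absurd hc (hγ β hβD)
        · exact hc
      have hβm : β.length ≤ m := hlen ▸ hβδ.length_le
      obtain ⟨ρ, rfl⟩ := hβδ
      have hρ : ρ.length = m - β.length := by
        rw [List.length_append] at hlen; omega
      exact ⟨⟨⟨β, hβD, hγβ, hβm⟩, ⟨ρ, hρ⟩⟩, rfl⟩
  rw [← Equiv.tsum_eq (Equiv.ofBijective _ hbij) (fun δ => strProb P δ.1)]
  have hstep : ∀ x : Σ β : {β : List A // β ∈ D ∧ γ <+: β ∧ β.length ≤ m},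
      {ρ : List A // ρ.length = m - β.1.length},
      strProb P ((Equiv.ofBijective _ hbij) x).1 = strProb P x.1.1 * strProb P x.2.1 := by
    rintro ⟨⟨β, hβ⟩, ⟨ρ, hρ⟩⟩
    exact strProb_append P β ρ
  rw [tsum_congr hstep, ENNReal.tsum_sigma'
    (f := fun x : Σ β : {β : List A // β ∈ D ∧ γ <+: β ∧ β.length ≤ m},
      {ρ : List A // ρ.length = m - β.1.length} => strProb P x.1.1 * strProb P x.2.1)]
  refine tsum_congr fun β => ?_
  show ∑' ρ : {ρ : List A // ρ.length = m - β.1.length},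
      strProb P β.1 * strProb P ρ.1 = strProb P β.1
  rw [ENNReal.tsum_mul_left, tsum_strProb_len P (m - β.1.length), mul_one]

lemma partition_b (γ : List A) (hγ : ∀ β ∈ D, ¬ β <+: γ)
    {m : ℕ} (hm : γ.length ≤ m) :
    (∑' δ : {δ : List A // δ.length = m ∧ γ <+: δ ∧ ∃ β ∈ D, β <+: δ}, strProb P δ.1)
      + (∑' δ : ↑{δ : List A | δ ∈ Tset D m ∧ γ <+: δ}, strProb P δ.1) = strProb P γ := by
  classical
  have hset : {δ : List A | δ.length = m ∧ γ <+: δ}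
      = {δ : List A | δ.length = m ∧ γ <+: δ ∧ ∃ β ∈ D, β <+: δ}
        ∪ {δ : List A | δ ∈ Tset D m ∧ γ <+: δ} := by
    ext δ
    constructor
    · rintro ⟨hlen, hpre⟩
      by_cases hD : ∃ β ∈ D, β <+: δ
      · exact Or.inl ⟨hlen, hpre, hD⟩
      · push_neg at hD
        exact Or.inr ⟨⟨hlen, hD⟩, hpre⟩
    · rintro (⟨hlen, hpre, _⟩ | ⟨⟨hlen, _⟩, hpre⟩) <;> exact ⟨hlen, hpre⟩
  have hdisj : Disjoint {δ : List A | δ.length = m ∧ γ <+: δ ∧ ∃ β ∈ D, β <+: δ}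
      {δ : List A | δ ∈ Tset D m ∧ γ <+: δ} := by
    rw [Set.disjoint_left]
    rintro δ ⟨_, _, β, hβD, hβpre⟩ ⟨⟨_, hT⟩, _⟩
    exact hT β hβD hβpre
  have h3 : (∑' δ : ↑{δ : List A | δ.length = m ∧ γ <+: δ}, strProb P δ.1)
      = strProb P γ := tsum_strProb_ext P γ hm
  rw [hset] at h3
  rw [ENNReal.summable.tsum_union_disjoint (f := fun δ : List A => strProb P δ)
    hdisj ENNReal.summable] at h3
  exact h3

end Partition


section Limits

variable {A : Type*} (P : PMF A) {D : Set (List A)}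

lemma tsum_set_eq {X : Type*} (f : X → ℝ≥0∞) {s t : Set X} (h : s = t) :
    ∑' x : s, f x = ∑' x : t, f x := by rw [h]

lemma prefixProb_add_t (hdict : IsDictionary D) (m : ℕ) :
    prefixProb P D m + ∑' δ : ↑(Tset D m), strProb P δ.1 = 1 := by
  have hγ : ∀ β ∈ D, ¬ β <+: ([] : List A) := fun β hβ hpre =>
    hdict β hβ (List.prefix_nil.mp hpre)
  have h := partition_b P D [] hγ (Nat.zero_le m)
  rw [strProb_nil] at h
  have e1 : (∑' δ : {δ : List A // δ.length = m ∧ [] <+: δ ∧ ∃ β ∈ D, β <+: δ},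
        strProb P δ.1) = prefixProb P D m :=
    Equiv.tsum_eq (Equiv.subtypeEquivRight (fun δ => by
      simp only [List.nil_prefix, true_and])) (fun δ : {γ : List A //
        γ.length = m ∧ ∃ β ∈ D, β <+: γ} => strProb P δ.1)
  have e2 : (∑' δ : ↑{δ : List A | δ ∈ Tset D m ∧ [] <+: δ}, strProb P δ.1)
      = ∑' δ : ↑(Tset D m), strProb P δ.1 :=
    Equiv.tsum_eq (Equiv.subtypeEquivRight (fun δ => by
      simp only [Set.mem_setOf_eq, List.nil_prefix, and_true])) (fun δ : ↑(Tset D m) =>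
        strProb P δ.1)
  rw [← e1, ← e2]
  exact h

lemma tendsto_tsum_Tset (hdict : IsDictionary D) (hasc : IsASC P D) :
    Tendsto (fun m => ∑' δ : ↑(Tset D m), strProb P δ.1) atTop (nhds 0) := by
  have h1 : ∀ m, (∑' δ : ↑(Tset D m), strProb P δ.1) = 1 - prefixProb P D m := by
    intro m
    have h := prefixProb_add_t P hdict m
    have hne : prefixProb P D m ≠ ⊤ := by
      intro htop
      rw [htop] at h
      simp at h
    rw [← h, ENNReal.add_sub_cancel_left hne]
  simp only [h1]
  have h2 : Tendsto (fun m => 1 - prefixProb P D m) atTop (nhds (1 - 1)) :=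
    ((ENNReal.continuous_sub_left ENNReal.one_ne_top).tendsto 1).comp hasc
  simpa using h2

lemma tsum_D_above (hdict : IsDictionary D) (hprop : IsProper D) (hasc : IsASC P D)
    (γ : List A) (hγ : ∀ β ∈ D, ¬ β <+: γ) :
    ∑' α : ↑{α : List A | α ∈ D ∧ γ <+: α}, strProb P α.1 = strProb P γ := by
  set S : ℕ → Set (List A) := fun m => {β | β ∈ D ∧ γ <+: β ∧ β.length ≤ m} with hS
  have hmono : Monotone S := fun m₁ m₂ h β hβ => ⟨hβ.1, hβ.2.1, hβ.2.2.trans h⟩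
  have hU : ⋃ m, S m = {α : List A | α ∈ D ∧ γ <+: α} := by
    ext α
    simp only [Set.mem_iUnion, hS, Set.mem_setOf_eq]
    constructor
    · rintro ⟨m, h1, h2, _⟩; exact ⟨h1, h2⟩
    · rintro ⟨h1, h2⟩; exact ⟨α.length, h1, h2, le_refl _⟩
  rw [← hU, tsum_iUnion_mono _ S hmono]
  have hpm : Monotone (fun m => ∑' x : ↑(S m), strProb P x.1) :=
    fun m₁ m₂ h => tsum_set_mono_le _ (hmono h)
  have htend : Tendsto (fun m => ∑' x : ↑(S m), strProb P x.1) atTop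
      (nhds (⨆ m, ∑' x : ↑(S m), strProb P x.1)) := tendsto_atTop_iSup hpm
  have htγ : Tendsto (fun m => ∑' δ : ↑{δ : List A | δ ∈ Tset D m ∧ γ <+: δ},
      strProb P δ.1) atTop (nhds 0) := by
    refine tendsto_of_tendsto_of_tendsto_of_le_of_le tendsto_const_nhds
      (tendsto_tsum_Tset P hdict hasc) (fun m => zero_le) (fun m => ?_)
    exact tsum_set_mono_le _ (fun δ hδ => hδ.1)
  have heq : ∀ᶠ m in atTop, (∑' x : ↑(S m), strProb P x.1)
      + (∑' δ : ↑{δ : List A | δ ∈ Tset D m ∧ γ <+: δ}, strProb P δ.1) = strProb P γ := by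
    filter_upwards [eventually_ge_atTop γ.length] with m hm
    have hb := partition_b P D γ hγ hm
    have ha := partition_a P D hprop γ hγ hm
    rw [ha] at hb
    exact hb
  have hlim : Tendsto (fun m => (∑' x : ↑(S m), strProb P x.1)
      + (∑' δ : ↑{δ : List A | δ ∈ Tset D m ∧ γ <+: δ}, strProb P δ.1)) atTop
      (nhds ((⨆ m, ∑' x : ↑(S m), strProb P x.1) + 0)) := htend.add htγ
  rw [add_zero] at hlim
  exact tendsto_nhds_unique (hlim.congr' heq) tendsto_const_nhds

open Classical in
lemma fiber_sum (hdict : IsDictionary D) (hprop : IsProper D) (hasc : IsASC P D)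
    (γ : List A) (a : A) :
    ∑' α : ↑{α : List A | α ∈ D ∧ γ ++ [a] <+: α}, strProb P α.1
      = if ∀ β ∈ D, ¬ β <+: γ then strProb P γ * P a else 0 := by
  classical
  by_cases hγ : ∀ β ∈ D, ¬ β <+: γ
  · rw [if_pos hγ]
    by_cases hmem : γ ++ [a] ∈ D
    · have hset : {α : List A | α ∈ D ∧ γ ++ [a] <+: α} = {γ ++ [a]} := by
        ext α
        simp only [Set.mem_setOf_eq, Set.mem_singleton_iff]
        constructor
        · rintro ⟨hα, hpre⟩
          exact (hprop _ hmem _ hα hpre).symm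
        · rintro rfl
          exact ⟨hmem, List.prefix_refl _⟩
      rw [tsum_set_eq _ hset, tsum_singleton, strProb_append, strProb_cons, strProb_nil,
        mul_one]
    · have hγa : ∀ β ∈ D, ¬ β <+: γ ++ [a] := by
        intro β hβ hpre
        have hlt : β.length < (γ ++ [a]).length := by
          rcases lt_or_eq_of_le hpre.length_le with h | h
          · exact h
          · exact absurd (hpre.eq_of_length h) (by rintro rfl; exact hmem hβ)
        have hlen : β.length ≤ γ.length := by
          simp only [List.length_append, List.length_singleton] at hlt; omega
        have hβγ : β <+: γ := by
          have h1 := hpre.take γ.length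
          rwa [List.take_of_length_le hlen, List.take_left] at h1
        exact hγ β hβ hβγ
      rw [tsum_D_above P hdict hprop hasc (γ ++ [a]) hγa, strProb_append, strProb_cons,
        strProb_nil, mul_one]
  · rw [if_neg hγ]
    push_neg at hγ
    obtain ⟨β, hβD, hβγ⟩ := hγ
    have : IsEmpty ↑{α : List A | α ∈ D ∧ γ ++ [a] <+: α} := by
      refine ⟨?_⟩
      rintro ⟨α, hαD, hpre⟩
      have hβα : β <+: α := hβγ.trans ((List.prefix_append γ [a]).trans hpre)
      obtain rfl : β = α := hprop β hβD α hαD hβα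
      have h1 : (γ ++ [a]).length ≤ β.length := hpre.length_le
      have h2 : β.length ≤ γ.length := hβγ.length_le
      simp only [List.length_append, List.length_singleton] at h1
      omega
    exact tsum_empty

end Limits


section MainSum

variable {A : Type*} (P : PMF A) {D : Set (List A)}

lemma take_get_prefix (l : List A) (i : Fin l.length) :
    l.take i.1 ++ [l.get i] <+: l := by
  have h := List.take_concat_get i.2
  rw [List.concat_eq_append] at h
  rw [List.get_eq_getElem, h]
  exact List.take_prefix _ _

lemma list_sum_fin {M : Type*} [AddCommMonoid M] (w : A → M) :
    ∀ l : List A, (l.map w).sum = ∑ i : Fin l.length, w (l.get i) := by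
  intro l
  induction l with
  | nil => simp
  | cons a l ih =>
    rw [List.map_cons, List.sum_cons, ih]
    exact (Fin.sum_univ_succ fun i : Fin (l.length + 1) => w ((a :: l).get i)).symm

open Classical in
lemma tsum_D_weighted (hdict : IsDictionary D) (hprop : IsProper D) (hasc : IsASC P D)
    (w : A → ℝ≥0∞) :
    ∑' α : ↑D, strProb P α.1 * ((α.1.map w).sum)
      = (∑' a : A, P a * w a) * ∑' γ : ↑{γ : List A | ∀ β ∈ D, ¬ β <+: γ}, strProb P γ.1 := by
  have h1 : ∀ α : ↑D, strProb P α.1 * (α.1.map w).sum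
      = ∑' i : Fin α.1.length, strProb P α.1 * w (α.1.get i) := by
    intro α
    rw [tsum_fintype, list_sum_fin, Finset.mul_sum]
  have hbij : Function.Bijective
      (fun x : Σ α : ↑D, Fin α.1.length =>
        (⟨(x.1.1.take x.2.1, x.1.1.get x.2),
          ⟨x.1.1, x.1.2, take_get_prefix x.1.1 x.2⟩⟩ :
          Σ q : List A × A, ↑{α : List A | α ∈ D ∧ q.1 ++ [q.2] <+: α})) := by
    constructor
    · rintro ⟨⟨α₁, hα₁⟩, i₁⟩ ⟨⟨α₂, hα₂⟩, i₂⟩ h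
      obtain rfl : α₁ = α₂ := congrArg (fun y : Σ q : List A × A,
        ↑{α : List A | α ∈ D ∧ q.1 ++ [q.2] <+: α} => (y.2 : List A)) h
      have hq := congrArg (fun y : Σ q : List A × A,
        ↑{α : List A | α ∈ D ∧ q.1 ++ [q.2] <+: α} => y.1.1.length) h
      simp only [List.length_take] at hq
      have hq2 : (i₁ : ℕ) ⊓ α₁.length = (i₂ : ℕ) ⊓ α₁.length := hq
      have hb₁ : (i₁ : ℕ) < α₁.length := i₁.2
      have hb₂ : (i₂ : ℕ) < α₁.length := i₂.2
      have hival : (i₁ : ℕ) = (i₂ : ℕ) := by omega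
      exact Sigma.ext rfl (heq_of_eq (Fin.ext hival))
    · rintro ⟨⟨γ, a⟩, ⟨α, hαD, hpre⟩⟩
      have hlt : γ.length < α.length := by
        have := hpre.length_le
        simp only [List.length_append, List.length_singleton] at this
        omega
      have h1' : α.take γ.length = γ := by
        have h := hpre.take γ.length
        rw [List.take_left] at h
        exact (h.eq_of_length (by simp [List.length_take]; omega)).symm
      have h2' : α.get ⟨γ.length, hlt⟩ = a := by
        obtain ⟨ρ, rfl⟩ := hpre
        rw [List.get_eq_getElem]
        rw [List.getElem_append_left (by simp)]
        exact List.getElem_concat_length rfl (by simp)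
      refine ⟨⟨⟨α, hαD⟩, ⟨γ.length, hlt⟩⟩, ?_⟩
      refine Sigma.ext (Prod.ext h1' h2') ?_
      refine (Subtype.heq_iff_coe_eq (fun x => ?_)).mpr rfl
      show (x ∈ D ∧ α.take γ.length ++ [α.get ⟨γ.length, hlt⟩] <+: x)
        ↔ (x ∈ D ∧ γ ++ [a] <+: x)
      rw [h1', h2']
  calc ∑' α : ↑D, strProb P α.1 * (α.1.map w).sum
      = ∑' α : ↑D, ∑' i : Fin α.1.length, strProb P α.1 * w (α.1.get i) := tsum_congr h1
    _ = ∑' x : Σ α : ↑D, Fin α.1.length, strProb P x.1.1 * w (x.1.1.get x.2) :=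
        (ENNReal.tsum_sigma' (fun x : Σ α : ↑D, Fin α.1.length =>
          strProb P x.1.1 * w (x.1.1.get x.2))).symm
    _ = ∑' y : Σ q : List A × A, ↑{α : List A | α ∈ D ∧ q.1 ++ [q.2] <+: α},
          strProb P y.2.1 * w y.1.2 :=
        Equiv.tsum_eq (Equiv.ofBijective _ hbij)
          (fun y : Σ q : List A × A, ↑{α : List A | α ∈ D ∧ q.1 ++ [q.2] <+: α} =>
            strProb P y.2.1 * w y.1.2)
    _ = ∑' q : List A × A, ∑' α : ↑{α : List A | α ∈ D ∧ q.1 ++ [q.2] <+: α},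
          strProb P α.1 * w q.2 := ENNReal.tsum_sigma' _
    _ = ∑' q : List A × A,
          (∑' α : ↑{α : List A | α ∈ D ∧ q.1 ++ [q.2] <+: α}, strProb P α.1) * w q.2 :=
        tsum_congr fun q => ENNReal.tsum_mul_right
    _ = ∑' q : List A × A,
          (if ∀ β ∈ D, ¬ β <+: q.1 then strProb P q.1 * P q.2 else 0) * w q.2 :=
        tsum_congr fun q => by rw [fiber_sum P hdict hprop hasc q.1 q.2]
    _ = ∑' γ : List A, ∑' a : A,
          (if ∀ β ∈ D, ¬ β <+: γ then strProb P γ * P a else 0) * w a :=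
        ENNReal.tsum_prod'
    _ = ∑' γ : List A,
          (if ∀ β ∈ D, ¬ β <+: γ then strProb P γ else 0) * ∑' a : A, P a * w a := by
        refine tsum_congr fun γ => ?_
        by_cases h : ∀ β ∈ D, ¬ β <+: γ
        · simp only [if_pos h]
          rw [← ENNReal.tsum_mul_left]
          exact tsum_congr fun a => by ring
        · simp [if_neg h]
    _ = (∑' γ : List A, (if ∀ β ∈ D, ¬ β <+: γ then strProb P γ else 0))
          * ∑' a : A, P a * w a := ENNReal.tsum_mul_right
    _ = (∑' a : A, P a * w a)
          * ∑' γ : ↑{γ : List A | ∀ β ∈ D, ¬ β <+: γ}, strProb P γ.1 := by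
        rw [mul_comm]
        congr 1
        rw [tsum_subtype]
        refine tsum_congr fun γ => ?_
        rw [Set.indicator_apply]
        exact if_congr Iff.rfl rfl rfl

end MainSum


section Final

variable {A : Type*} (P : PMF A)

lemma PMF_apply_ne_top (a : A) : P a ≠ ⊤ :=
  ne_top_of_le_ne_top ENNReal.one_ne_top (P.coe_le_one a)

lemma entTerm_div (a : A) : P a * (entTerm (P a) / P a) = entTerm (P a) := by
  rcases eq_or_ne (P a) 0 with h0 | h0
  · rw [h0]; simp [entTerm_zero]
  · rw [mul_comm]
    exact ENNReal.div_mul_cancel h0 (PMF_apply_ne_top P a)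

lemma entTerm_one : entTerm (1 : ℝ≥0∞) = 0 := by
  simp [entTerm, Real.logb_one]

lemma entTerm_strProb : ∀ l : List A,
    entTerm (strProb P l) = strProb P l * (l.map (fun a => entTerm (P a) / P a)).sum := by
  intro l
  induction l with
  | nil =>
    rw [strProb_nil, entTerm_one]
    simp
  | cons a l ih =>
    rw [strProb_cons, entTerm_mul (P.coe_le_one a) (strProb_le_one P l), List.map_cons,
      List.sum_cons, ih]
    set c : ℝ≥0∞ := entTerm (P a) / P a with hc
    have hE : entTerm (P a) = P a * c := (entTerm_div P a).symm
    rw [hE]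
    ring

lemma list_sum_ones : ∀ l : List A, (l.map (fun _ => (1 : ℝ≥0∞))).sum = (l.length : ℝ≥0∞) := by
  intro l
  induction l with
  | nil => simp
  | cons a l ih =>
    rw [List.map_cons, List.sum_cons, ih, List.length_cons]
    rw [Nat.cast_succ, add_comm]

end Final

/-- For a countable alphabet `A`, a distribution `P` with finite
entropy, and a proper and almost surely complete dictionary `D`,
`H(D) = H(P) ⬝ l̄(D)`. -/
theorem dictEntropy_eq_srcEntropy_mul_avgLen {A : Type*} [Countable A]
    (P : PMF A) (hH : srcEntropy P < ⊤) (D : Set (List A))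
    (hdict : IsDictionary D) (hprop : IsProper D) (hasc : IsASC P D) :
    dictEntropy P D = srcEntropy P * avgLen P D := by
  have h1 : avgLen P D
      = (∑' a : A, P a * (fun _ => (1 : ℝ≥0∞)) a)
        * ∑' γ : ↑{γ : List A | ∀ β ∈ D, ¬ β <+: γ}, strProb P γ.1 := by
    rw [← tsum_D_weighted P hdict hprop hasc (fun _ => (1 : ℝ≥0∞))]
    exact tsum_congr fun α => by rw [list_sum_ones]
  have hsum1 : (∑' a : A, P a * (fun _ => (1 : ℝ≥0∞)) a) = 1 := by
    simp only [mul_one]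
    exact P.tsum_coe
  rw [hsum1, one_mul] at h1
  have h2 : dictEntropy P D
      = (∑' a : A, P a * (entTerm (P a) / P a))
        * ∑' γ : ↑{γ : List A | ∀ β ∈ D, ¬ β <+: γ}, strProb P γ.1 := by
    rw [← tsum_D_weighted P hdict hprop hasc (fun a => entTerm (P a) / P a)]
    exact tsum_congr fun α => entTerm_strProb P α.1
  have hsrc : (∑' a : A, P a * (entTerm (P a) / P a)) = srcEntropy P :=
    tsum_congr fun a => entTerm_div P a
  rw [hsrc, ← h1] at h2
  exact h2
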